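/- Let p and q be distinct prime numbers. Then the number of isomorphism classes of prime graphs on p·q vertices equals c̃_{pq} − c̃_p · c̃_q, where c̃_n denotes the number of isomorphism classes of connected simple graphs on n vertices. -/

import Mathlib

open SimpleGraph

namespace PrimeCount

variable {α β : Type*}

lemma iso_dist_le {G : SimpleGraph α} {H : SimpleGraph β} (e : G ≃g H) (u v : α) :
    H.dist (e u) (e v) ≤ G.dist u v := by
  by_cases hr : G.Reachable u v
  · obtain ⟨p, hp⟩ := hr.exists_walk_length_eq_dist
    calc H.dist (e u) (e v) ≤ (p.map e.toHom).length := SimpleGraph.dist_le _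
      _ = p.length := SimpleGraph.Walk.length_map _ _
      _ = G.dist u v := hp
  · rw [SimpleGraph.dist_eq_zero_of_not_reachable hr,
      SimpleGraph.dist_eq_zero_of_not_reachable (fun h => hr (Iso.reachable_iff.mp h))]

lemma iso_dist_eq {G : SimpleGraph α} {H : SimpleGraph β} (e : G ≃g H) (u v : α) :
    H.dist (e u) (e v) = G.dist u v := by
  refine le_antisymm (iso_dist_le e u v) ?_
  have := iso_dist_le e.symm (e u) (e v)
  simpa using this

end PrimeCount

namespace PrimeCount2
open SimpleGraph Walk

variable {α β : Type*} {A : SimpleGraph α} {B : SimpleGraph β}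

lemma walk_length_ge (hA : A.Connected) (hB : B.Connected) {x y : α × β}
    (w : (A □ B).Walk x y) :
    A.dist x.1 y.1 + B.dist x.2 y.2 ≤ w.length := by
  induction w with
  | nil => simp
  | @cons u v z h w ih =>
    rw [Walk.length_cons]
    rcases h with ⟨ha, h2⟩ | ⟨hb, h1⟩
    · have t := hA.dist_triangle (u := u.1) (v := v.1) (w := z.1)
      rw [SimpleGraph.dist_eq_one_iff_adj.mpr ha] at t
      have h2' : B.dist u.2 z.2 = B.dist v.2 z.2 := by rw [h2]
      omega
    · have t := hB.dist_triangle (u := u.2) (v := v.2) (w := z.2)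
      rw [SimpleGraph.dist_eq_one_iff_adj.mpr hb] at t
      have h1' : A.dist u.1 z.1 = A.dist v.1 z.1 := by rw [h1]
      omega

lemma boxProd_dist (hA : A.Connected) (hB : B.Connected) (x y : α × β) :
    (A □ B).dist x y = A.dist x.1 y.1 + B.dist x.2 y.2 := by
  obtain ⟨a, b⟩ := x
  obtain ⟨a', b'⟩ := y
  refine le_antisymm ?_ ?_
  · obtain ⟨p, hp⟩ := (hA a a').exists_walk_length_eq_dist
    obtain ⟨q, hq⟩ := (hB b b').exists_walk_length_eq_dist
    calc (A □ B).dist (a, b) (a', b')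
        ≤ ((p.boxProdLeft B b).append (q.boxProdRight A a')).length :=
          SimpleGraph.dist_le _
      _ = p.length + q.length := by
          rw [Walk.length_append, Walk.boxProdLeft, Walk.boxProdRight]
          exact congrArg₂ (· + ·) (Walk.length_map _ _) (Walk.length_map _ _)
      _ = _ := by rw [hp, hq]
  · obtain ⟨w, hw⟩ := ((hA.boxProd hB) (a, b) (a', b')).exists_walk_length_eq_dist
    have := walk_length_ge hA hB w
    omega

end PrimeCount2

namespace Helpers
open SimpleGraph

variable {α β γ δ : Type*}

/-- pullback of a graph along an equivalence, as an iso. -/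
def comapIso (e : α ≃ β) (G : SimpleGraph β) : G.comap e ≃g G :=
  ⟨e, Iff.rfl⟩

/-- congruence of box products under isomorphisms. -/
def boxProdIsoCongr {A : SimpleGraph α} {B : SimpleGraph β} {C : SimpleGraph γ}
    {D : SimpleGraph δ} (e₁ : A ≃g C) (e₂ : B ≃g D) : (A □ B) ≃g (C □ D) where
  toEquiv := Equiv.prodCongr e₁.toEquiv e₂.toEquiv
  map_rel_iff' := by
    rintro ⟨a, b⟩ ⟨a', b'⟩
    simp only [Equiv.prodCongr_apply, Prod.map, boxProd_adj]
    rw [show e₁.toEquiv a = e₁ a from rfl, show e₁.toEquiv a' = e₁ a' from rfl,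
      show e₂.toEquiv b = e₂ b from rfl, show e₂.toEquiv b' = e₂ b' from rfl,
      e₁.map_rel_iff, e₂.map_rel_iff, EmbeddingLike.apply_eq_iff_eq,
      EmbeddingLike.apply_eq_iff_eq]

lemma boxProd_adj_of_snd_eq {A : SimpleGraph α} {B : SimpleGraph β} {x y : α × β}
    (h : x.2 = y.2) : (A □ B).Adj x y ↔ A.Adj x.1 y.1 := by
  obtain ⟨a, b⟩ := x
  obtain ⟨a', b'⟩ := y
  subst h
  exact boxProd_adj_left

lemma boxProd_adj_of_fst_eq {A : SimpleGraph α} {B : SimpleGraph β} {x y : α × β}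
    (h : x.1 = y.1) : (A □ B).Adj x y ↔ B.Adj x.2 y.2 := by
  obtain ⟨a, b⟩ := x
  obtain ⟨a', b'⟩ := y
  subst h
  exact boxProd_adj_right

end Helpers

namespace Layers

variable {α β : Type*} [Fintype α] [Fintype β]

lemma layer_struct {n : ℕ} (hn : n.Prime) (cond : α × β → Prop)
    (hcard : Nat.card {v : α × β // cond v} = n)
    (hbox : ∀ u v : α × β, cond u → cond v → cond (u.1, v.2)) :
    (∃ a0, ∀ v, cond v → v.1 = a0) ∨ (∃ b0, ∀ v, cond v → v.2 = b0) := by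
  classical
  set F : Finset (α × β) := Finset.univ.filter cond with hF
  have hmem : ∀ v : α × β, v ∈ F ↔ cond v := by
    intro v; simp [hF]
  have hFc : F.card = n := by
    rw [← hcard, Nat.card_eq_fintype_card, Fintype.card_subtype]
  set X := F.image Prod.fst with hX
  set Y := F.image Prod.snd with hY
  have hprod : F = X ×ˢ Y := by
    ext v
    rw [Finset.mem_product]
    constructor
    · intro hv
      exact ⟨Finset.mem_image_of_mem _ hv, Finset.mem_image_of_mem _ hv⟩
    · rintro ⟨h1, h2⟩
      rw [hX, Finset.mem_image] at h1
      rw [hY, Finset.mem_image] at h2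
      obtain ⟨u, hu, hu1⟩ := h1
      obtain ⟨w, hw, hw2⟩ := h2
      have := hbox u w ((hmem u).mp hu) ((hmem w).mp hw)
      rw [hu1, hw2] at this
      exact (hmem v).mpr this
  have hXY : X.card * Y.card = n := by
    rw [← hFc, hprod, Finset.card_product]
  rcases (Nat.Prime.eq_one_or_self_of_dvd hn X.card ⟨Y.card, hXY.symm⟩) with h1 | h1
  · obtain ⟨a0, ha0⟩ := Finset.card_eq_one.mp h1
    left
    refine ⟨a0, fun v hv => ?_⟩
    have : v.1 ∈ X := Finset.mem_image_of_mem _ ((hmem v).mpr hv)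
    rw [ha0, Finset.mem_singleton] at this
    exact this
  · have hY1 : Y.card = 1 := by
      have hnpos := hn.pos
      have : X.card * Y.card = X.card * 1 := by rw [hXY, h1, Nat.mul_one]
      exact Nat.eq_of_mul_eq_mul_left (by omega) this
    obtain ⟨b0, hb0⟩ := Finset.card_eq_one.mp hY1
    right
    refine ⟨b0, fun v hv => ?_⟩
    have : v.2 ∈ Y := Finset.mem_image_of_mem _ ((hmem v).mpr hv)
    rw [hb0, Finset.mem_singleton] at this
    exact this

lemma layer_full (cond : α × β → Prop)
    (hcard : Nat.card {v : α × β // cond v} = Fintype.card α)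
    {b0 : β} (hb : ∀ v, cond v → v.2 = b0) : ∀ v : α × β, cond v ↔ v.2 = b0 := by
  classical
  have hinj : Function.Injective (fun v : {v : α × β // cond v} => v.1.1) := by
    rintro ⟨u, hu⟩ ⟨v, hv⟩ h
    simp only at h
    exact Subtype.ext (Prod.ext h ((hb _ hu).trans (hb _ hv).symm))
  have hbij : Function.Bijective (fun v : {v : α × β // cond v} => v.1.1) :=
    (Fintype.bijective_iff_injective_and_card _).mpr
      ⟨hinj, by rw [← Nat.card_eq_fintype_card, hcard]⟩
  intro v
  refine ⟨fun h => hb v h, fun h2 => ?_⟩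
  obtain ⟨⟨u, hu⟩, h⟩ := hbij.2 v.1
  simp only at h
  have : u = v := Prod.ext h ((hb u hu).trans h2.symm)
  rwa [← this]

lemma layer_full_fst (cond : α × β → Prop)
    (hcard : Nat.card {v : α × β // cond v} = Fintype.card β)
    {a0 : α} (ha : ∀ v, cond v → v.1 = a0) : ∀ v : α × β, cond v ↔ v.1 = a0 := by
  classical
  have key := layer_full (α := β) (β := α) (fun w => cond (w.2, w.1))
    (by
      rw [← hcard]
      exact Nat.card_congr ⟨fun w => ⟨(w.1.2, w.1.1), w.2⟩, fun v => ⟨(v.1.2, v.1.1), v.2⟩,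
        fun w => rfl, fun v => rfl⟩)
    (b0 := a0) (fun w hw => ha _ hw)
  intro v
  exact key (v.2, v.1)

end Layers

namespace Key
open SimpleGraph PrimeCount PrimeCount2 Helpers Layers

variable {α β γt δt : Type*}

lemma snd_eq_iff {p q : ℕ} (hp : p.Prime) (hq : q.Prime) (hpq : p ≠ q)
    [Fintype α] [Fintype β] [Fintype γt] [Fintype δt]
    (hcα : Fintype.card α = p) (hcβ : Fintype.card β = q)
    (hcγ : Fintype.card γt = p) (hcδ : Fintype.card δt = q)
    {A : SimpleGraph α} {B : SimpleGraph β} {C : SimpleGraph γt} {D : SimpleGraph δt}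
    (hA : A.Connected) (hB : B.Connected) (hC : C.Connected) (hD : D.Connected)
    (φ : (A □ B) ≃g (C □ D)) :
    ∀ u v : α × β, (φ u).2 = (φ v).2 ↔ u.2 = v.2 := by
  classical
  have dd : ∀ u v : α × β,
      A.dist u.1 v.1 + B.dist u.2 v.2 =
        C.dist (φ u).1 (φ v).1 + D.dist (φ u).2 (φ v).2 := by
    intro u v
    rw [← boxProd_dist hA hB, ← boxProd_dist hC hD, iso_dist_eq]
  -- the box (convexity) property for pulled-back C-layers
  have hbox : ∀ u v : α × β, (φ u).2 = (φ v).2 → (φ (u.1, v.2)).2 = (φ u).2 := by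
    intro u v h
    have e1 := dd u v
    have e2 := dd u (u.1, v.2)
    have e3 := dd (u.1, v.2) v
    rw [h] at e1
    simp only [SimpleGraph.dist_self] at e1 e2 e3
    rw [← h] at e3
    have hcm : D.dist (φ u).2 (φ (u.1, v.2)).2 = D.dist (φ (u.1, v.2)).2 (φ u).2 :=
      SimpleGraph.dist_comm
    have htri : C.dist (φ u).1 (φ v).1 ≤
        C.dist (φ u).1 (φ (u.1, v.2)).1 + C.dist (φ (u.1, v.2)).1 (φ v).1 :=
      hC.dist_triangle
    have h0 : D.dist (φ u).2 (φ (u.1, v.2)).2 = 0 := by omega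
    exact ((hD.dist_eq_zero_iff).mp h0).symm
  -- the box property for pulled-back D-layers
  have hboxγ : ∀ u v : α × β, (φ u).1 = (φ v).1 → (φ (u.1, v.2)).1 = (φ u).1 := by
    intro u v h
    have e1 := dd u v
    have e2 := dd u (u.1, v.2)
    have e3 := dd (u.1, v.2) v
    rw [h] at e1
    simp only [SimpleGraph.dist_self] at e1 e2 e3
    rw [← h] at e3
    have hcm : C.dist (φ u).1 (φ (u.1, v.2)).1 = C.dist (φ (u.1, v.2)).1 (φ u).1 :=
      SimpleGraph.dist_comm
    have htri : D.dist (φ u).2 (φ v).2 ≤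
        D.dist (φ u).2 (φ (u.1, v.2)).2 + D.dist (φ (u.1, v.2)).2 (φ v).2 :=
      hD.dist_triangle
    have h0 : C.dist (φ u).1 (φ (u.1, v.2)).1 = 0 := by omega
    exact ((hC.dist_eq_zero_iff).mp h0).symm
  -- cardinalities of pulled-back layers
  have hScard : ∀ d : δt, Nat.card {v : α × β // (φ v).2 = d} = p := by
    intro d
    have e : {v : α × β // (φ v).2 = d} ≃ γt :=
      { toFun := fun v => (φ v.1).1
        invFun := fun c => ⟨φ.symm (c, d), by simp⟩
        left_inv := fun v => by
          apply Subtype.ext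
          have h1 : ((φ v.1).1, d) = φ v.1 := Prod.ext rfl v.2.symm
          simp only [h1]
          simp
        right_inv := fun c => by simp }
    rw [Nat.card_congr e, Nat.card_eq_fintype_card, hcγ]
  have hTcard : ∀ c : γt, Nat.card {v : α × β // (φ v).1 = c} = q := by
    intro c
    have e : {v : α × β // (φ v).1 = c} ≃ δt :=
      { toFun := fun v => (φ v.1).2
        invFun := fun d => ⟨φ.symm (c, d), by simp⟩
        left_inv := fun v => by
          apply Subtype.ext
          have h1 : (c, (φ v.1).2) = φ v.1 := Prod.ext v.2.symm rfl
          simp only [h1]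
          simp
        right_inv := fun d => by simp }
    rw [Nat.card_congr e, Nat.card_eq_fintype_card, hcδ]
  -- per-layer dichotomy for C-layers
  have Sdich : ∀ d : δt, (∃ b0, ∀ v : α × β, (φ v).2 = d ↔ v.2 = b0) ∨
      (∃ a0, ∀ v : α × β, (φ v).2 = d → v.1 = a0) := by
    intro d
    have hb : ∀ u v : α × β, (φ u).2 = d → (φ v).2 = d → (φ (u.1, v.2)).2 = d := by
      intro u v hu hv
      rw [hbox u v (hu.trans hv.symm)]
      exact hu
    rcases layer_struct hp (fun v => (φ v).2 = d) (hScard d) hb with ⟨a0, h⟩ | ⟨b0, h⟩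
    · exact Or.inr ⟨a0, h⟩
    · exact Or.inl ⟨b0, layer_full _ (by rw [hScard d, hcα]) h⟩
  -- per-layer dichotomy for D-layers
  have Tdich : ∀ c : γt, (∃ a0, ∀ v : α × β, (φ v).1 = c ↔ v.1 = a0) ∨
      (∃ b0, ∀ v : α × β, (φ v).1 = c → v.2 = b0) := by
    intro c
    have hb : ∀ u v : α × β, (φ u).1 = c → (φ v).1 = c → (φ (u.1, v.2)).1 = c := by
      intro u v hu hv
      rw [hboxγ u v (hu.trans hv.symm)]
      exact hu
    rcases layer_struct hq (fun v => (φ v).1 = c) (hTcard c) hb with ⟨a0, h⟩ | ⟨b0, h⟩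
    · exact Or.inl ⟨a0, layer_full_fst _ (by rw [hTcard c, hcβ]) h⟩
    · exact Or.inr ⟨b0, h⟩
  by_cases hex : ∃ d b0, ∀ v : α × β, (φ v).2 = d ↔ v.2 = b0
  · obtain ⟨d0, b0, h0⟩ := hex
    have TFull : ∀ c : γt, ∃ a0, ∀ v : α × β, (φ v).1 = c ↔ v.1 = a0 := by
      intro c
      rcases Tdich c with h | ⟨b1, h1⟩
      · exact h
      exfalso
      have hγ : (φ (φ.symm (c, d0))).1 = c := by simp
      have hδ : (φ (φ.symm (c, d0))).2 = d0 := by simp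
      have hb0 : (φ.symm (c, d0)).2 = b0 := (h0 _).mp hδ
      have hb1 : (φ.symm (c, d0)).2 = b1 := h1 _ hγ
      have h2 : 1 < Fintype.card {v : α × β // (φ v).1 = c} := by
        rw [← Nat.card_eq_fintype_card, hTcard c]; exact hq.one_lt
      obtain ⟨⟨u, hu⟩, ⟨w, hw⟩, hne⟩ := Fintype.exists_pair_of_one_lt_card h2
      have hu2 : u.2 = b0 := by rw [h1 u hu, ← hb1, hb0]
      have hw2 : w.2 = b0 := by rw [h1 w hw, ← hb1, hb0]
      have heq : φ u = φ w :=
        Prod.ext (hu.trans hw.symm) (((h0 u).mpr hu2).trans ((h0 w).mpr hw2).symm)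
      exact hne (Subtype.ext (EmbeddingLike.injective φ heq))
    have SFullAll : ∀ d : δt, ∃ bb, ∀ v : α × β, (φ v).2 = d ↔ v.2 = bb := by
      intro d
      rcases Sdich d with h | ⟨a1, h1⟩
      · exact h
      exfalso
      have h2 : 1 < Fintype.card {v : α × β // (φ v).2 = d} := by
        rw [← Nat.card_eq_fintype_card, hScard d]; exact hp.one_lt
      obtain ⟨⟨u, hu⟩, ⟨w, hw⟩, hne⟩ := Fintype.exists_pair_of_one_lt_card h2
      obtain ⟨aT, hT⟩ := TFull (φ u).1
      have hu1 : u.1 = aT := (hT u).mp rfl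
      have hw1 : w.1 = aT := by rw [h1 w hw, ← h1 u hu, hu1]
      have heq : φ u = φ w :=
        Prod.ext (((hT w).mpr hw1).symm ▸ rfl : (φ u).1 = (φ w).1) (hu.trans hw.symm)
      exact hne (Subtype.ext (EmbeddingLike.injective φ heq))
    intro u v
    obtain ⟨bb, hf⟩ := SFullAll ((φ u).2)
    constructor
    · intro h
      exact ((hf u).mp rfl).trans ((hf v).mp h.symm).symm
    · intro h
      have h1 : u.2 = bb := (hf u).mp rfl
      have h2 : v.2 = bb := by rw [← h]; exact h1
      exact ((hf v).mpr h2).symm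
  · exfalso
    have hall : ∀ d : δt, ∃ a0, ∀ v : α × β, (φ v).2 = d → v.1 = a0 := by
      intro d
      rcases Sdich d with ⟨b0, h⟩ | h
      · exact absurd ⟨d, b0, h⟩ hex
      · exact h
    have hαne : Nonempty α := Fintype.card_pos_iff.mp (by rw [hcα]; exact hp.pos)
    obtain ⟨astar⟩ := hαne
    classical
    have hβeq : Fintype.card β =
        ∑ d : δt, (Finset.univ.filter fun b : β => (φ (astar, b)).2 = d).card := by
      rw [← Finset.card_univ]
      exact Finset.card_eq_sum_card_fiberwise fun b _ => Finset.mem_univ _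
    have hdvd : ∀ d : δt, p ∣ (Finset.univ.filter fun b : β => (φ (astar, b)).2 = d).card := by
      intro d
      by_cases hne : (Finset.univ.filter fun b : β => (φ (astar, b)).2 = d).Nonempty
      · obtain ⟨b1, hb1⟩ := hne
        rw [Finset.mem_filter] at hb1
        obtain ⟨a0, h0⟩ := hall d
        have ha : astar = a0 := h0 (astar, b1) hb1.2
        have hcardeq : (Finset.univ.filter fun b : β => (φ (astar, b)).2 = d).card = p := by
          have e : {b : β // (φ (astar, b)).2 = d} ≃ {v : α × β // (φ v).2 = d} :=
            { toFun := fun b => ⟨(astar, b.1), b.2⟩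
              invFun := fun v => ⟨v.1.2, by
                have hv1 : v.1.1 = a0 := h0 v.1 v.2
                have hx : (astar, v.1.2) = v.1 := Prod.ext (by rw [ha, ← hv1]) rfl
                rw [hx]; exact v.2⟩
              left_inv := fun b => rfl
              right_inv := fun v => by
                apply Subtype.ext
                have hv1 : v.1.1 = a0 := h0 v.1 v.2
                exact Prod.ext (by simp [ha, ← hv1]) rfl }
          rw [← Fintype.card_subtype, ← Nat.card_eq_fintype_card, Nat.card_congr e, hScard d]
        rw [hcardeq]
      · rw [Finset.not_nonempty_iff_eq_empty] at hne
        rw [hne]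
        simp
    have hpq' : p ∣ q := by
      rw [← hcβ, hβeq]
      exact Finset.dvd_sum fun d _ => hdvd d
    exact hpq ((Nat.prime_dvd_prime_iff_eq hp hq).mp hpq')

end Key

namespace Key2
open SimpleGraph PrimeCount PrimeCount2 Helpers Layers Key

variable {α β γt δt : Type*}

lemma key {p q : ℕ} (hp : p.Prime) (hq : q.Prime) (hpq : p ≠ q)
    [Fintype α] [Fintype β] [Fintype γt] [Fintype δt]
    (hcα : Fintype.card α = p) (hcβ : Fintype.card β = q)
    (hcγ : Fintype.card γt = p) (hcδ : Fintype.card δt = q)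
    {A : SimpleGraph α} {B : SimpleGraph β} {C : SimpleGraph γt} {D : SimpleGraph δt}
    (hA : A.Connected) (hB : B.Connected) (hC : C.Connected) (hD : D.Connected)
    (φ : (A □ B) ≃g (C □ D)) : Nonempty (A ≃g C) ∧ Nonempty (B ≃g D) := by
  classical
  have snd_iff := snd_eq_iff hp hq hpq hcα hcβ hcγ hcδ hA hB hC hD φ
  have fst_iff : ∀ u v : α × β, (φ u).1 = (φ v).1 ↔ u.1 = v.1 := by
    have h := snd_eq_iff hq hp (Ne.symm hpq) hcβ hcα hcδ hcγ hB hA hD hC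
      ((SimpleGraph.boxProdComm B A).trans (φ.trans (SimpleGraph.boxProdComm C D)))
    intro u v
    exact h (u.2, u.1) (v.2, v.1)
  have hαne : Nonempty α := Fintype.card_pos_iff.mp (by rw [hcα]; exact hp.pos)
  have hβne : Nonempty β := Fintype.card_pos_iff.mp (by rw [hcβ]; exact hq.pos)
  have hδne : Nonempty δt := Fintype.card_pos_iff.mp (by rw [hcδ]; exact hq.pos)
  have hγne : Nonempty γt := Fintype.card_pos_iff.mp (by rw [hcγ]; exact hp.pos)
  obtain ⟨a0⟩ := hαne
  obtain ⟨b0⟩ := hβne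
  obtain ⟨c0⟩ := hγne
  obtain ⟨d0⟩ := hδne
  have hbij1 : Function.Bijective (fun a : α => (φ (a, b0)).1) := by
    constructor
    · intro a a' h
      exact (fst_iff (a, b0) (a', b0)).mp h
    · intro c
      refine ⟨(φ.symm (c, d0)).1, ?_⟩
      have hc : (φ (φ.symm (c, d0))).1 = c := by simp
      exact ((fst_iff ((φ.symm (c, d0)).1, b0) (φ.symm (c, d0))).mpr rfl).trans hc
  have hbij2 : Function.Bijective (fun b : β => (φ (a0, b)).2) := by
    constructor
    · intro b b' h
      exact (snd_iff (a0, b) (a0, b')).mp h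
    · intro d
      refine ⟨(φ.symm (c0, d)).2, ?_⟩
      have hd : (φ (φ.symm (c0, d))).2 = d := by simp
      exact ((snd_iff (a0, (φ.symm (c0, d)).2) (φ.symm (c0, d))).mpr rfl).trans hd
  refine ⟨⟨⟨Equiv.ofBijective _ hbij1, ?_⟩⟩, ⟨⟨Equiv.ofBijective _ hbij2, ?_⟩⟩⟩
  · intro a a'
    show C.Adj (φ (a, b0)).1 (φ (a', b0)).1 ↔ A.Adj a a'
    have h2 : (φ (a, b0)).2 = (φ (a', b0)).2 := (snd_iff _ _).mpr rfl
    exact (boxProd_adj_of_snd_eq h2).symm.trans (φ.map_rel_iff.trans boxProd_adj_left)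
  · intro b b'
    show D.Adj (φ (a0, b)).2 (φ (a0, b')).2 ↔ B.Adj b b'
    have h1 : (φ (a0, b)).1 = (φ (a0, b')).1 := (fst_iff _ _).mpr rfl
    exact (boxProd_adj_of_fst_eq h1).symm.trans (φ.map_rel_iff.trans boxProd_adj_right)

end Key2

namespace QuotUtil

lemma quot_equiv_of_maps {A : Type*} {B : Type*} (rA : A → A → Prop) (rB : B → B → Prop)
    (f : A → B) (g : B → A)
    (hf : ∀ a a', rA a a' → rB (f a) (f a'))
    (hg : ∀ b b', rB b b' → rA (g b) (g b'))
    (hgf : ∀ a, rA (g (f a)) a) (hfg : ∀ b, rB (f (g b)) b) :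
    Nonempty (Quot rA ≃ Quot rB) := by
  refine ⟨{
    toFun := Quot.lift (fun a => Quot.mk rB (f a)) fun a a' h => Quot.sound (hf a a' h)
    invFun := Quot.lift (fun b => Quot.mk rA (g b)) fun b b' h => Quot.sound (hg b b' h)
    left_inv := ?_
    right_inv := ?_ }⟩
  · intro x
    induction x using Quot.ind with
    | _ a => exact Quot.sound (hgf a)
  · intro y
    induction y using Quot.ind with
    | _ b => exact Quot.sound (hfg b)

lemma quot_sum_partition {X : Type*} (r : X → X → Prop) (hr : Equivalence r) (P : X → Prop)
    (hP : ∀ x y, r x y → P x → P y) :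
    Nonempty (((Quot fun a b : {x // P x} => r a.1 b.1) ⊕
      (Quot fun a b : {x // ¬ P x} => r a.1 b.1)) ≃ Quot r) := by
  classical
  refine ⟨Equiv.ofBijective
    (Sum.elim (Quot.lift (fun a => Quot.mk r a.1) fun a b h => Quot.sound h)
      (Quot.lift (fun a => Quot.mk r a.1) fun a b h => Quot.sound h)) ⟨?_, ?_⟩⟩
  · rintro (x | x) (y | y) h
    · induction x using Quot.ind with
      | _ a =>
      induction y using Quot.ind with
      | _ b =>
      have hr' : r a.1 b.1 := hr.eqvGen_iff.mp (Quot.eq.mp h)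
      exact congrArg Sum.inl (Quot.sound hr')
    · induction x using Quot.ind with
      | _ a =>
      induction y using Quot.ind with
      | _ b =>
      have hr' : r a.1 b.1 := hr.eqvGen_iff.mp (Quot.eq.mp h)
      exact absurd (hP _ _ hr' a.2) b.2
    · induction x using Quot.ind with
      | _ a =>
      induction y using Quot.ind with
      | _ b =>
      have hr' : r a.1 b.1 := hr.eqvGen_iff.mp (Quot.eq.mp h)
      exact absurd (hP _ _ (hr.symm hr') b.2) a.2
    · induction x using Quot.ind with
      | _ a =>
      induction y using Quot.ind with
      | _ b =>
      have hr' : r a.1 b.1 := hr.eqvGen_iff.mp (Quot.eq.mp h)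
      exact congrArg Sum.inr (Quot.sound hr')
  · intro z
    induction z using Quot.ind with
    | _ x =>
    by_cases hx : P x
    · exact ⟨Sum.inl (Quot.mk _ ⟨x, hx⟩), rfl⟩
    · exact ⟨Sum.inr (Quot.mk _ ⟨x, hx⟩), rfl⟩

lemma quot_prod_equiv {A B : Type*} (rA : A → A → Prop) (rB : B → B → Prop)
    (hA : Equivalence rA) (hB : Equivalence rB) :
    Nonempty ((Quot fun x y : A × B => rA x.1 y.1 ∧ rB x.2 y.2) ≃ (Quot rA × Quot rB)) := by
  refine ⟨Equiv.ofBijective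
    (Quot.lift (fun ab => (Quot.mk rA ab.1, Quot.mk rB ab.2))
      fun x y h => Prod.ext (Quot.sound h.1) (Quot.sound h.2)) ⟨?_, ?_⟩⟩
  · intro x y h
    induction x using Quot.ind with
    | _ a =>
    induction y using Quot.ind with
    | _ b =>
    rw [Prod.mk.injEq] at h
    have h1 : rA a.1 b.1 := hA.eqvGen_iff.mp (Quot.eq.mp h.1)
    have h2 : rB a.2 b.2 := hB.eqvGen_iff.mp (Quot.eq.mp h.2)
    exact Quot.sound ⟨h1, h2⟩
  · rintro ⟨x, y⟩
    induction x using Quot.ind with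
    | _ a =>
    induction y using Quot.ind with
    | _ b =>
    exact ⟨Quot.mk _ (a, b), rfl⟩

end QuotUtil

/-- A finite simple graph is prime with respect to the box product. -/
def SimpleGraph.IsPrime {V : Type} [Fintype V] (G : SimpleGraph V) : Prop :=
  G.Connected ∧ 2 ≤ Fintype.card V ∧
    ∀ (V₁ V₂ : Type) [Fintype V₁] [Fintype V₂]
      (H₁ : SimpleGraph V₁) (H₂ : SimpleGraph V₂),
      Nonempty (G ≃g H₁.boxProd H₂) →
      Fintype.card V₁ = 1 ∨ Fintype.card V₂ = 1

/-- The number of isomorphism classes of connected simple graphs on `n` vertices. -/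
noncomputable def numConnectedClasses (n : ℕ) : ℕ :=
  Nat.card
    (Quot fun G H : {G : SimpleGraph (Fin n) // G.Connected} => Nonempty (G.1 ≃g H.1))

/-- The number of isomorphism classes of prime graphs on `m` vertices. -/
noncomputable def numPrimeClasses (m : ℕ) : ℕ :=
  Nat.card
    (Quot fun G H : {G : SimpleGraph (Fin m) // G.IsPrime} => Nonempty (G.1 ≃g H.1))

namespace Assemble
open SimpleGraph Helpers Key2 QuotUtil

lemma isPrime_of_iso {V W : Type} [Fintype V] [Fintype W] {G : SimpleGraph V}
    {H : SimpleGraph W} (e : G ≃g H) (hG : G.IsPrime) : H.IsPrime := by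
  obtain ⟨hc, h2, hf⟩ := hG
  refine ⟨e.connected_iff.mp hc, ?_, ?_⟩
  · rwa [← Fintype.card_congr e.toEquiv]
  · intro V₁ V₂ _ _ H₁ H₂ ⟨ψ⟩
    exact hf V₁ V₂ H₁ H₂ ⟨e.trans ψ⟩

lemma exists_factor {p q : ℕ} (hp : p.Prime) (hq : q.Prime)
    (G : SimpleGraph (Fin (p * q))) (hc : G.Connected) (hnp : ¬ G.IsPrime) :
    ∃ x : {G : SimpleGraph (Fin p) // G.Connected} × {G : SimpleGraph (Fin q) // G.Connected},
      Nonempty (G ≃g x.1.1 □ x.2.1) := by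
  rw [SimpleGraph.IsPrime] at hnp
  push_neg at hnp
  have h2 : 2 ≤ Fintype.card (Fin (p * q)) := by
    rw [Fintype.card_fin]
    have := hp.two_le
    have := hq.two_le
    nlinarith
  obtain ⟨V₁, V₂, i₁, i₂, H₁, H₂, ⟨ψ⟩, hn1, hn2⟩ := hnp hc h2
  have hcards : Fintype.card V₁ * Fintype.card V₂ = p * q := by
    rw [← Fintype.card_prod]
    rw [← Fintype.card_congr ψ.toEquiv, Fintype.card_fin]
  have hcG : (H₁ □ H₂).Connected := ψ.connected_iff.mp hc
  have h1c : H₁.Connected := hcG.ofBoxProdLeft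
  have h2c : H₂.Connected := hcG.ofBoxProdRight
  have hpd : p ∣ Fintype.card V₁ * Fintype.card V₂ := by
    rw [hcards]; exact dvd_mul_right p q
  rcases (Nat.Prime.dvd_mul hp).mp hpd with hd | hd
  · -- p divides card V₁ : conclude card V₁ = p, card V₂ = q
    obtain ⟨k, hk⟩ := hd
    have hcv2 : Fintype.card V₂ ∣ q := by
      refine ⟨k, ?_⟩
      have : p * (Fintype.card V₂ * k) = p * q := by rw [← hcards, hk]; ring
      exact (Nat.eq_of_mul_eq_mul_left hp.pos this).symm
    rcases (hq.eq_one_or_self_of_dvd _ hcv2) with h1 | h1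
    · exact absurd h1 hn2
    have hcv1 : Fintype.card V₁ = p := by
      rw [h1] at hcards
      exact Nat.eq_of_mul_eq_mul_right hq.pos hcards
    have e₁ : V₁ ≃ Fin p := Fintype.equivFinOfCardEq hcv1
    have e₂ : V₂ ≃ Fin q := Fintype.equivFinOfCardEq h1
    refine ⟨(⟨H₁.comap ⇑e₁.symm, (comapIso e₁.symm H₁).connected_iff.mpr h1c⟩,
             ⟨H₂.comap ⇑e₂.symm, (comapIso e₂.symm H₂).connected_iff.mpr h2c⟩),
      ⟨ψ.trans (boxProdIsoCongr (comapIso e₁.symm H₁) (comapIso e₂.symm H₂)).symm⟩⟩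
  · -- p divides card V₂ : conclude card V₂ = p, card V₁ = q
    obtain ⟨k, hk⟩ := hd
    have hcv1 : Fintype.card V₁ ∣ q := by
      refine ⟨k, ?_⟩
      have : p * (Fintype.card V₁ * k) = p * q := by rw [← hcards, hk]; ring
      exact (Nat.eq_of_mul_eq_mul_left hp.pos this).symm
    rcases (hq.eq_one_or_self_of_dvd _ hcv1) with h1 | h1
    · exact absurd h1 hn1
    have hcv2 : Fintype.card V₂ = p := by
      rw [h1] at hcards
      have h' : q * Fintype.card V₂ = q * p := hcards.trans (Nat.mul_comm p q)
      exact Nat.eq_of_mul_eq_mul_left hq.pos h'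
    have e₁ : V₂ ≃ Fin p := Fintype.equivFinOfCardEq hcv2
    have e₂ : V₁ ≃ Fin q := Fintype.equivFinOfCardEq h1
    refine ⟨(⟨H₂.comap ⇑e₁.symm, (comapIso e₁.symm H₂).connected_iff.mpr h2c⟩,
             ⟨H₁.comap ⇑e₂.symm, (comapIso e₂.symm H₁).connected_iff.mpr h1c⟩),
      ⟨(ψ.trans (SimpleGraph.boxProdComm H₁ H₂)).trans
        (boxProdIsoCongr (comapIso e₁.symm H₂) (comapIso e₂.symm H₁)).symm⟩⟩

end Assemble

namespace Assemble2
open SimpleGraph Helpers Key2 QuotUtil Assemble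

lemma hrequiv (n : ℕ) :
    Equivalence (fun G H : {G : SimpleGraph (Fin n) // G.Connected} =>
      Nonempty (G.1 ≃g H.1)) := by
  constructor
  · intro G; exact ⟨RelIso.refl _⟩
  · rintro G H ⟨e⟩; exact ⟨e.symm⟩
  · rintro G H K ⟨e⟩ ⟨f⟩; exact ⟨e.trans f⟩

variable {p q : ℕ}

/-- the box product of a connected pair, transported to `Fin (p*q)`. -/
noncomputable def mkG
    (x : {G : SimpleGraph (Fin p) // G.Connected} × {G : SimpleGraph (Fin q) // G.Connected}) :
    SimpleGraph (Fin (p * q)) :=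
  (x.1.1 □ x.2.1).comap ⇑(finProdFinEquiv (m := p) (n := q)).symm

noncomputable def mkGiso
    (x : {G : SimpleGraph (Fin p) // G.Connected} × {G : SimpleGraph (Fin q) // G.Connected}) :
    mkG x ≃g x.1.1 □ x.2.1 :=
  comapIso (finProdFinEquiv (m := p) (n := q)).symm (x.1.1 □ x.2.1)

lemma mkG_connected
    (x : {G : SimpleGraph (Fin p) // G.Connected} × {G : SimpleGraph (Fin q) // G.Connected}) :
    (mkG x).Connected :=
  (mkGiso x).connected_iff.mpr ((SimpleGraph.connected_boxProd).mpr ⟨x.1.2, x.2.2⟩)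

lemma mkG_not_isPrime (hp : p.Prime) (hq : q.Prime)
    (x : {G : SimpleGraph (Fin p) // G.Connected} × {G : SimpleGraph (Fin q) // G.Connected}) :
    ¬ (mkG x).IsPrime := by
  intro hP
  obtain ⟨_, _, hf⟩ := hP
  rcases hf (Fin p) (Fin q) x.1.1 x.2.1 ⟨mkGiso x⟩ with h | h
  · exact hp.ne_one (by simpa using h)
  · exact hq.ne_one (by simpa using h)

/-- a chosen factorization of a connected non-prime graph. -/
noncomputable def pickPair (hp : p.Prime) (hq : q.Prime)
    (b : {y : {G : SimpleGraph (Fin (p * q)) // G.Connected} // ¬ y.1.IsPrime}) :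
    {G : SimpleGraph (Fin p) // G.Connected} × {G : SimpleGraph (Fin q) // G.Connected} :=
  (exists_factor hp hq b.1.1 b.1.2 b.2).choose

lemma pickPair_spec (hp : p.Prime) (hq : q.Prime)
    (b : {y : {G : SimpleGraph (Fin (p * q)) // G.Connected} // ¬ y.1.IsPrime}) :
    Nonempty (b.1.1 ≃g (pickPair hp hq b).1.1 □ (pickPair hp hq b).2.1) :=
  (exists_factor hp hq b.1.1 b.1.2 b.2).choose_spec

lemma main_nat (p q : ℕ) (hp : Nat.Prime p) (hq : Nat.Prime q) (hpq : p ≠ q) :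
    numConnectedClasses (p * q) =
      numPrimeClasses (p * q) + numConnectedClasses p * numConnectedClasses q := by
  classical
  obtain ⟨esum⟩ := quot_sum_partition
    (fun G H : {G : SimpleGraph (Fin (p * q)) // G.Connected} => Nonempty (G.1 ≃g H.1))
    (hrequiv (p * q)) (fun G => G.1.IsPrime)
    (fun x y h hx => h.elim fun e => isPrime_of_iso e hx)
  obtain ⟨ePrime⟩ := quot_equiv_of_maps
    (fun a b : {x : {G : SimpleGraph (Fin (p * q)) // G.Connected} // x.1.IsPrime} =>
      Nonempty (a.1.1 ≃g b.1.1))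
    (fun G H : {G : SimpleGraph (Fin (p * q)) // G.IsPrime} => Nonempty (G.1 ≃g H.1))
    (fun x => ⟨x.1.1, x.2⟩) (fun g => ⟨⟨g.1, g.2.1⟩, g.2⟩)
    (fun a a' h => h) (fun b b' h => h)
    (fun a => ⟨RelIso.refl _⟩) (fun b => ⟨RelIso.refl _⟩)
  have keyPQ : ∀ (x y : {G : SimpleGraph (Fin p) // G.Connected} ×
      {G : SimpleGraph (Fin q) // G.Connected}),
      ((x.1.1 □ x.2.1) ≃g (y.1.1 □ y.2.1)) →
      Nonempty (x.1.1 ≃g y.1.1) ∧ Nonempty (x.2.1 ≃g y.2.1) := by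
    intro x y e
    exact key hp hq hpq (Fintype.card_fin p) (Fintype.card_fin q)
      (Fintype.card_fin p) (Fintype.card_fin q) x.1.2 x.2.2 y.1.2 y.2.2 e
  obtain ⟨eNP⟩ := quot_equiv_of_maps
    (fun x y : {G : SimpleGraph (Fin p) // G.Connected} ×
        {G : SimpleGraph (Fin q) // G.Connected} =>
      Nonempty (x.1.1 ≃g y.1.1) ∧ Nonempty (x.2.1 ≃g y.2.1))
    (fun a b : {x : {G : SimpleGraph (Fin (p * q)) // G.Connected} // ¬ x.1.IsPrime} =>
      Nonempty (a.1.1 ≃g b.1.1))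
    (fun x => ⟨⟨mkG x, mkG_connected x⟩, mkG_not_isPrime hp hq x⟩)
    (fun b => pickPair hp hq b)
    (by
      rintro a a' ⟨⟨e1⟩, ⟨e2⟩⟩
      exact ⟨(mkGiso a).trans ((boxProdIsoCongr e1 e2).trans (mkGiso a').symm)⟩)
    (by
      rintro b b' ⟨e⟩
      obtain ⟨sb⟩ := pickPair_spec hp hq b
      obtain ⟨sb'⟩ := pickPair_spec hp hq b'
      exact keyPQ _ _ ((sb.symm.trans e).trans sb'))
    (by
      intro a
      obtain ⟨s⟩ := pickPair_spec hp hq ⟨⟨mkG a, mkG_connected a⟩, mkG_not_isPrime hp hq a⟩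
      exact keyPQ _ _ (s.symm.trans (mkGiso a)))
    (by
      intro b
      obtain ⟨s⟩ := pickPair_spec hp hq b
      exact ⟨(mkGiso (pickPair hp hq b)).trans s.symm⟩)
  obtain ⟨eprod⟩ := quot_prod_equiv
    (fun G H : {G : SimpleGraph (Fin p) // G.Connected} => Nonempty (G.1 ≃g H.1))
    (fun G H : {G : SimpleGraph (Fin q) // G.Connected} => Nonempty (G.1 ≃g H.1))
    (hrequiv p) (hrequiv q)
  have h1 : numConnectedClasses (p * q) =
      numPrimeClasses (p * q) +
        Nat.card (Quot (fun a b : {x : {G : SimpleGraph (Fin (p * q)) // G.Connected} //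
          ¬ x.1.IsPrime} => Nonempty (a.1.1 ≃g b.1.1))) := by
    rw [numConnectedClasses, ← Nat.card_congr esum, Nat.card_sum, numPrimeClasses,
      Nat.card_congr ePrime]
  rw [h1, ← Nat.card_congr eNP, Nat.card_congr eprod, Nat.card_prod,
    numConnectedClasses, numConnectedClasses]

end Assemble2

/-- For distinct primes `p` and `q`, the number of unlabeled prime graphs on
`p·q` vertices equals `c̃_{pq} − c̃_p · c̃_q`. -/
theorem numPrimeClasses_mul_of_distinct_primes (p q : ℕ)
    (hp : Nat.Prime p) (hq : Nat.Prime q) (hpq : p ≠ q) :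
    (numPrimeClasses (p * q) : ℤ) =
      numConnectedClasses (p * q) - numConnectedClasses p * numConnectedClasses q := by
  have h := Assemble2.main_nat p q hp hq hpq
  zify at h
  linarith [h]
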